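/- The localization B[Δ^{−1}] is a free module over P[Δ^{−1}] of rank 2^{2n}, with basis the 4^n products X_I·Y_J over all subsets I, J ⊆ {1,…,n} (the empty products being 1). Equivalently, the P[Δ^{−1}]-algebra map from the exterior algebra over P[Δ^{−1}] on 2n generators sending the i-th generators to X_i and Y_i respectively is an isomorphism onto B[Δ^{−1}]. -/

import Mathlib

open scoped BigOperators

set_option synthInstance.maxHeartbeats 1000000
set_option maxHeartbeats 1000000
set_option linter.unusedSectionVars false

noncomputable section

variable (R : Type) [CommRing R] (n : ℕ)

/-- The polynomial ring `R[t_1, …, t_n]`. -/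
abbrev Pn := MvPolynomial (Fin n) R

/-- `B`: the exterior algebra over `Pn` on the `2n` generators `u_1,…,u_n,v_1,…,v_n`. -/
abbrev Bn := ExteriorAlgebra (Pn R n) ((Fin n ⊕ Fin n) → Pn R n)

/-- The variable `t_i`. -/
def tv (i : Fin n) : Pn R n := MvPolynomial.X i

/-- The exterior generator `u_i`. -/
def uu (i : Fin n) : Bn R n := ExteriorAlgebra.ι (Pn R n) (Pi.single (Sum.inl i) 1)

/-- The exterior generator `v_i`. -/
def vv (i : Fin n) : Bn R n := ExteriorAlgebra.ι (Pn R n) (Pi.single (Sum.inr i) 1)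

/-- `X_l = ∑ t_i^(l-1) u_i` (indices `i` run over `Fin n`, `l ≥ 1`). -/
def Xel (l : ℕ) : Bn R n :=
  ∑ i : Fin n, algebraMap (Pn R n) (Bn R n) (tv R n i ^ (l - 1)) * uu R n i

/-- `Y_l = ∑ t_i^(l-1) v_i`. -/
def Yel (l : ℕ) : Bn R n :=
  ∑ i : Fin n, algebraMap (Pn R n) (Bn R n) (tv R n i ^ (l - 1)) * vv R n i

/-- `X_I`, the product of the `X_{i+1}` for `i ∈ I`, in increasing order. -/
def XI (I : Finset (Fin n)) : Bn R n := ((I.sort (· ≤ ·)).map fun i => Xel R n (i.1 + 1)).prod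

/-- `Y_I`, the product of the `Y_{i+1}` for `i ∈ I`, in increasing order. -/
def YI (I : Finset (Fin n)) : Bn R n := ((I.sort (· ≤ ·)).map fun i => Yel R n (i.1 + 1)).prod

/-- `(1 + p s)⁻¹ = ∑ (-p)^k s^k`, the inverse of `1 + p s` in `Pn[[s]]`. -/
def invOnePlus (p : Pn R n) : PowerSeries (Pn R n) := PowerSeries.mk fun k => (-p) ^ k

/-- The `i`-th factor `1 + s u_i v_i (1 + t_i s)⁻¹` of the power series defining the `Z_l`. -/
def Zfactor (i : Fin n) : PowerSeries (Bn R n) :=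
  1 + PowerSeries.C (uu R n i * vv R n i) *
    PowerSeries.map (algebraMap (Pn R n) (Bn R n)) (PowerSeries.X * invOnePlus R n (tv R n i))

/-- The power series `∏_{i=1}^n (1 + s u_i v_i (1 + t_i s)⁻¹) ∈ B[[s]]`. -/
def Zseries : PowerSeries (Bn R n) := ((List.finRange n).map (Zfactor R n)).prod

/-- `Z_l`, the coefficient of `s^l` in `Zseries`. -/
def Zel (l : ℕ) : Bn R n := PowerSeries.coeff l (Zseries R n)

/-- The Vandermonde matrix `V = (t_j^(i-1))`. -/
def Vmat : Matrix (Fin n) (Fin n) (Pn R n) := Matrix.of fun i j => tv R n j ^ (i : ℕ)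

/-- The Vandermonde determinant `Δ = det V = ∏_{i<j} (t_j - t_i)`. -/
def Dl : Pn R n := (Vmat R n).det


/-- The localization `P[Δ⁻¹]`. -/
abbrev Ploc (n : ℕ) := Localization.Away (Dl ℤ n)

/-- `B[Δ⁻¹]`, realized as the exterior algebra over `P[Δ⁻¹]` on the generators `u_i, v_i`. -/
abbrev Bloc (n : ℕ) := ExteriorAlgebra (Ploc n) ((Fin n ⊕ Fin n) → Ploc n)

/-- The image of `t_i` in `P[Δ⁻¹]`. -/
def tL (n : ℕ) (i : Fin n) : Ploc n := algebraMap (Pn ℤ n) (Ploc n) (tv ℤ n i)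

/-- The generator `u_i` of `B[Δ⁻¹]`. -/
def uL (n : ℕ) (i : Fin n) : Bloc n := ExteriorAlgebra.ι (Ploc n) (Pi.single (Sum.inl i) 1)

/-- The generator `v_i` of `B[Δ⁻¹]`. -/
def vL (n : ℕ) (i : Fin n) : Bloc n := ExteriorAlgebra.ι (Ploc n) (Pi.single (Sum.inr i) 1)

/-- `X_l ∈ B[Δ⁻¹]`. -/
def XelL (n : ℕ) (l : ℕ) : Bloc n :=
  ∑ i : Fin n, algebraMap (Ploc n) (Bloc n) (tL n i ^ (l - 1)) * uL n i

/-- `Y_l ∈ B[Δ⁻¹]`. -/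
def YelL (n : ℕ) (l : ℕ) : Bloc n :=
  ∑ i : Fin n, algebraMap (Ploc n) (Bloc n) (tL n i ^ (l - 1)) * vL n i

/-- `X_I ∈ B[Δ⁻¹]` (product in increasing order). -/
def XIL (n : ℕ) (I : Finset (Fin n)) : Bloc n :=
  ((I.sort (· ≤ ·)).map fun i => XelL n (i.1 + 1)).prod

/-- `Y_I ∈ B[Δ⁻¹]` (product in increasing order). -/
def YIL (n : ℕ) (I : Finset (Fin n)) : Bloc n :=
  ((I.sort (· ≤ ·)).map fun i => YelL n (i.1 + 1)).prod

/-- The family of the `4^n` products `X_I·Y_J`. -/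
def famL (n : ℕ) : Finset (Fin n) × Finset (Fin n) → Bloc n := fun p => XIL n p.1 * YIL n p.2


namespace ExtAux

variable (P : Type) [CommRing P] (κ : Type) [Fintype κ] [LinearOrder κ]

abbrev MM := κ → P
abbrev BB := ExteriorAlgebra P (MM P κ)
def ee (k : κ) : MM P κ := Pi.single k 1
def wl (l : List κ) : BB P κ := (l.map fun k => ExteriorAlgebra.ι P (ee P κ k)).prod
def w (S : Finset κ) : BB P κ := wl P κ (S.sort (· ≤ ·))
abbrev FF := Finset κ →₀ P

def Lk (k : κ) : FF P κ →ₗ[P] FF P κ :=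
  Finsupp.linearCombination P fun S : Finset κ =>
    if k ∈ S then 0 else ((-1 : P) ^ (S.filter (· < k)).card) • Finsupp.single (insert k S) 1

lemma Lk_single (k : κ) (S : Finset κ) (c : P) :
    Lk P κ k (Finsupp.single S c) =
      if k ∈ S then 0
      else Finsupp.single (insert k S) (((-1 : P) ^ (S.filter (· < k)).card) * c) := by
  rw [Lk, Finsupp.linearCombination_single]
  split_ifs with h
  · simp
  · rw [smul_smul, Finsupp.smul_single, smul_eq_mul, mul_one, mul_comm]

lemma Lk_comp_single (k j : κ) (S : Finset κ) (c : P) :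
    Lk P κ k (Lk P κ j (Finsupp.single S c)) + Lk P κ j (Lk P κ k (Finsupp.single S c)) = 0 := by
  by_cases hj : j ∈ S <;> by_cases hk : k ∈ S
  · simp [Lk_single, hj, hk]
  · rw [Lk_single P κ j, if_pos hj, map_zero, Lk_single P κ k, if_neg hk,
      Lk_single P κ j, if_pos (Finset.mem_insert_of_mem hj), zero_add]
  · rw [Lk_single P κ k, if_pos hk, map_zero, Lk_single P κ j, if_neg hj,
      Lk_single P κ k, if_pos (Finset.mem_insert_of_mem hk), add_zero]
  · rcases eq_or_ne k j with rfl | hkj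
    · rw [Lk_single P κ k, if_neg hj, Lk_single P κ k,
        if_pos (Finset.mem_insert_self k S), add_zero]
    · have hjk : j ≠ k := Ne.symm hkj
      have hk' : k ∉ insert j S := by simp [Finset.mem_insert, hkj, hk]
      have hj' : j ∉ insert k S := by simp [Finset.mem_insert, hjk, hj]
      rw [Lk_single, if_neg hj, Lk_single, if_neg hk', Lk_single, if_neg hk,
        Lk_single, if_neg hj', Finset.insert_comm, ← Finsupp.single_add]
      refine (congrArg (Finsupp.single _) ?_).trans (Finsupp.single_zero _)
      rcases Ne.lt_or_gt hkj with h | h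
      · -- k < j
        have h1 : (Finset.filter (· < j) (insert k S)).card
            = (Finset.filter (· < j) S).card + 1 := by
          rw [Finset.filter_insert, if_pos h, Finset.card_insert_of_notMem (by simp [hk])]
        have h2 : (Finset.filter (· < k) (insert j S)) = Finset.filter (· < k) S := by
          rw [Finset.filter_insert, if_neg (not_lt.mpr h.le)]
        rw [h1, h2, pow_succ]
        ring
      · -- j < k
        have h1 : (Finset.filter (· < k) (insert j S)).card
            = (Finset.filter (· < k) S).card + 1 := by
          rw [Finset.filter_insert, if_pos h, Finset.card_insert_of_notMem (by simp [hj])]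
        have h2 : (Finset.filter (· < j) (insert k S)) = Finset.filter (· < j) S := by
          rw [Finset.filter_insert, if_neg (not_lt.mpr h.le)]
        rw [h1, h2, pow_succ]
        ring

lemma Lk_sq (k : κ) (x : FF P κ) : Lk P κ k (Lk P κ k x) = 0 := by
  induction x using Finsupp.induction_linear with
  | zero => simp
  | add a b ha hb => simp [ha, hb]
  | single S b =>
    by_cases h : k ∈ S
    · simp [Lk_single, h]
    · rw [Lk_single, if_neg h, Lk_single, if_pos (Finset.mem_insert_self k S)]

lemma Lk_anticomm (k j : κ) (x : FF P κ) :
    Lk P κ k (Lk P κ j x) + Lk P κ j (Lk P κ k x) = 0 := by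
  induction x using Finsupp.induction_linear with
  | zero => simp
  | add a b ha hb =>
    rw [map_add, map_add, map_add, map_add]
    calc _ = (Lk P κ k (Lk P κ j a) + Lk P κ j (Lk P κ k a))
        + (Lk P κ k (Lk P κ j b) + Lk P κ j (Lk P κ k b)) := by abel
    _ = 0 := by rw [ha, hb, add_zero]
  | single S b => exact Lk_comp_single P κ k j S b


lemma Lk_anticomm_end (k j : κ) :
    (Lk P κ k : Module.End P (FF P κ)) * Lk P κ j + Lk P κ j * Lk P κ k = 0 :=
  LinearMap.ext fun x => by simpa [Module.End.mul_apply] using Lk_anticomm P κ k j x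

lemma Lk_sq_end (k : κ) : (Lk P κ k : Module.End P (FF P κ)) * Lk P κ k = 0 :=
  LinearMap.ext fun x => by simpa [Module.End.mul_apply] using Lk_sq P κ k x

/-- The linear map `M → End F`. -/
def LL : MM P κ →ₗ[P] Module.End P (FF P κ) :=
  ∑ k : κ, (LinearMap.proj k : MM P κ →ₗ[P] P).smulRight (Lk P κ k)

lemma LL_apply (m : MM P κ) : LL P κ m = ∑ k : κ, m k • Lk P κ k := by
  simp [LL, LinearMap.sum_apply]

lemma LL_ee (k : κ) : LL P κ (ee P κ k) = Lk P κ k := by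
  rw [LL_apply, Finset.sum_eq_single k]
  · simp [ee]
  · intro j _ hj
    simp [ee, Pi.single_apply, hj.symm]
  · intro h; exact absurd (Finset.mem_univ k) h

lemma LL_sq (m : MM P κ) : LL P κ m * LL P κ m = 0 := by
  rw [LL_apply, Finset.sum_mul_sum, ← Finset.sum_product']
  apply Finset.sum_involution (fun p _ => (p.2, p.1))
  · rintro ⟨k, j⟩ -
    show m k • Lk P κ k * m j • Lk P κ j + m j • Lk P κ j * m k • Lk P κ k = 0
    rw [smul_mul_smul_comm, smul_mul_smul_comm, mul_comm (m j) (m k), ← smul_add,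
      Lk_anticomm_end, smul_zero]
  · rintro ⟨k, j⟩ - hne h
    exfalso
    apply hne
    have hjk : j = k := congrArg Prod.fst (Prod.mk.injEq .. ▸ h : ((j, k) : κ × κ) = (k, j))
    subst hjk
    show m j • Lk P κ j * m j • Lk P κ j = 0
    rw [smul_mul_smul_comm, Lk_sq_end, smul_zero]
  · intro p _; exact Finset.mem_univ _
  · intro p _; rfl

/-- The representation `B → End F`. -/
def rho : BB P κ →ₐ[P] Module.End P (FF P κ) :=
  ExteriorAlgebra.lift P ⟨LL P κ, LL_sq P κ⟩

lemma rho_iota (m : MM P κ) : rho P κ (ExteriorAlgebra.ι P m) = LL P κ m :=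
  ExteriorAlgebra.lift_ι_apply P _ _ m

lemma rho_wl (l : List κ) (hl : l.Pairwise (· < ·)) :
    rho P κ (wl P κ l) (Finsupp.single ∅ 1) = Finsupp.single l.toFinset 1 := by
  induction l with
  | nil => simp [wl]
  | cons a t ih =>
    have hts : t.Pairwise (· < ·) := hl.of_cons
    have ha : ∀ x ∈ t, a < x := fun x hx => List.rel_of_pairwise_cons hl hx
    have step : wl P κ (a :: t) = ExteriorAlgebra.ι P (ee P κ a) * wl P κ t := by
      simp [wl]
    rw [step, map_mul, Module.End.mul_apply, ih hts, rho_iota, LL_ee]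
    have hna : a ∉ t.toFinset := by
      intro hmem
      exact absurd (ha a (List.mem_toFinset.mp hmem)) (lt_irrefl a)
    rw [Lk_single, if_neg hna]
    have : Finset.filter (· < a) t.toFinset = ∅ := by
      apply Finset.filter_false_of_mem
      intro x hx
      exact not_lt.mpr (ha x (List.mem_toFinset.mp hx)).le
    rw [this]
    simp

lemma w_lin_indep : LinearIndependent P (w P κ) := by
  classical
  apply LinearIndependent.of_comp
    ((LinearMap.applyₗ (Finsupp.single (∅ : Finset κ) (1:P))).comp (rho P κ).toLinearMap)
  have hcomp : (((LinearMap.applyₗ (Finsupp.single (∅ : Finset κ) (1:P))).comp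
      (rho P κ).toLinearMap) ∘ (w P κ)) = fun S : Finset κ => Finsupp.single S (1:P) := by
    funext S
    show rho P κ (w P κ S) (Finsupp.single ∅ 1) = _
    rw [w, rho_wl P κ _ ((Finset.sortedLT_sort S).pairwise), Finset.sort_toFinset]
  rw [hcomp]
  simpa using (Finsupp.basisSingleOne (R := P) (ι := Finset κ)).linearIndependent


lemma iota_anti (x y : MM P κ) :
    ExteriorAlgebra.ι P x * ExteriorAlgebra.ι P y
      = -(ExteriorAlgebra.ι P y * ExteriorAlgebra.ι P x) :=
  eq_neg_of_add_eq_zero_left (ExteriorAlgebra.ι_add_mul_swap x y)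

lemma sort_toFinset_of_sorted (l : List κ) (hl : l.Pairwise (· < ·)) :
    l.toFinset.sort (· ≤ ·) = l := by
  refine List.Perm.eq_of_pairwise' (Finset.pairwise_sort _ _) (hl.imp fun h => le_of_lt h)
    (List.perm_of_nodup_nodup_toFinset_eq (Finset.sort_nodup _ _) hl.nodup ?_)
  rw [Finset.sort_toFinset]

lemma wl_cons (a : κ) (t : List κ) :
    wl P κ (a :: t) = ExteriorAlgebra.ι P (ee P κ a) * wl P κ t := by simp [wl]

lemma key (l : List κ) (hl : l.Pairwise (· < ·)) (k : κ) :
    ExteriorAlgebra.ι P (ee P κ k) * wl P κ l = 0 ∨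
      ∃ (c : P) (l' : List κ), l'.Pairwise (· < ·) ∧ (∀ x ∈ l', x = k ∨ x ∈ l) ∧
        ExteriorAlgebra.ι P (ee P κ k) * wl P κ l = c • wl P κ l' := by
  induction l with
  | nil =>
    right
    refine ⟨1, [k], List.pairwise_singleton _ k, by simp, ?_⟩
    simp [wl]
  | cons a t ih =>
    have hts : t.Pairwise (· < ·) := hl.of_cons
    have hat : ∀ x ∈ t, a < x := fun x hx => List.rel_of_pairwise_cons hl hx
    rcases lt_trichotomy k a with hka | hka | hka
    · right
      refine ⟨1, k :: a :: t, ?_, ?_, ?_⟩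
      · refine List.pairwise_cons.mpr ⟨?_, hl⟩
        intro b hb
        rcases List.mem_cons.mp hb with rfl | hb
        · exact hka
        · exact hka.trans (hat b hb)
      · intro x hx
        rcases List.mem_cons.mp hx with rfl | hx
        · exact Or.inl rfl
        · exact Or.inr hx
      · rw [one_smul]; simp [wl]
    · left
      subst hka
      rw [wl_cons, ← mul_assoc, ExteriorAlgebra.ι_sq_zero, zero_mul]
    · rcases ih hts with h0 | ⟨c, t', ht', hmem, heq⟩
      · left
        rw [wl_cons, ← mul_assoc, iota_anti, neg_mul, mul_assoc, h0, mul_zero, neg_zero]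
      · right
        refine ⟨-c, a :: t', ?_, ?_, ?_⟩
        · refine List.pairwise_cons.mpr ⟨?_, ht'⟩
          intro b hb
          rcases hmem b hb with rfl | hb
          · exact hka
          · exact hat b hb
        · intro x hx
          rcases List.mem_cons.mp hx with rfl | hx
          · exact Or.inr (List.mem_cons_self)
          · rcases hmem x hx with rfl | h
            · exact Or.inl rfl
            · exact Or.inr (List.mem_cons_of_mem a h)
        · rw [wl_cons, ← mul_assoc, iota_anti, neg_mul, mul_assoc, heq, wl_cons,
            mul_smul_comm, ← neg_smul]

lemma iota_ee_mul_w_mem (k : κ) (S : Finset κ) :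
    ExteriorAlgebra.ι P (ee P κ k) * w P κ S ∈ Submodule.span P (Set.range (w P κ)) := by
  rcases key P κ (S.sort (· ≤ ·)) ((Finset.sortedLT_sort S).pairwise) k with h | ⟨c, l', hs, -, heq⟩
  · rw [w, h]; exact Submodule.zero_mem _
  · rw [w, heq]
    refine Submodule.smul_mem _ _ (Submodule.subset_span ⟨l'.toFinset, ?_⟩)
    rw [w, sort_toFinset_of_sorted (κ := κ) l' hs]

lemma iota_mul_mem (m : MM P κ) (x : BB P κ) (hx : x ∈ Submodule.span P (Set.range (w P κ))) :
    ExteriorAlgebra.ι P m * x ∈ Submodule.span P (Set.range (w P κ)) := by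
  have hk : ∀ k : κ, ∀ y ∈ Submodule.span P (Set.range (w P κ)),
      ExteriorAlgebra.ι P (ee P κ k) * y ∈ Submodule.span P (Set.range (w P κ)) := by
    intro k y hy
    induction hy using Submodule.span_induction with
    | mem z hz => obtain ⟨S, rfl⟩ := hz; exact iota_ee_mul_w_mem P κ k S
    | zero => rw [mul_zero]; exact Submodule.zero_mem _
    | add a b ha hb iha ihb => rw [mul_add]; exact Submodule.add_mem _ iha ihb
    | smul c a ha iha => rw [mul_smul_comm]; exact Submodule.smul_mem _ _ iha
  have hm : m = ∑ k : κ, m k • ee P κ k := by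
    funext j
    rw [pi_eq_sum_univ m]
    simp [ee, Pi.single_apply, eq_comm]
  have hrw : ExteriorAlgebra.ι P m * x
      = ∑ k : κ, m k • (ExteriorAlgebra.ι P (ee P κ k) * x) := by
    conv_lhs => rw [hm]
    rw [map_sum, Finset.sum_mul]
    refine Finset.sum_congr rfl fun k _ => ?_
    rw [map_smul, smul_mul_assoc]
  rw [hrw]
  exact Submodule.sum_mem _ fun k _ => Submodule.smul_mem _ _ (hk k x hx)

lemma w_span_top : Submodule.span P (Set.range (w P κ)) = ⊤ := by
  have h1 : (1 : BB P κ) ∈ Submodule.span P (Set.range (w P κ)) :=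
    Submodule.subset_span ⟨∅, by simp [w, wl, Finset.sort_empty]⟩
  rw [eq_top_iff]
  rintro x -
  have hx : ∀ y ∈ Submodule.span P (Set.range (w P κ)),
      x * y ∈ Submodule.span P (Set.range (w P κ)) := by
    induction x using ExteriorAlgebra.induction with
    | algebraMap r =>
      intro y hy
      rw [← Algebra.smul_def]
      exact Submodule.smul_mem _ _ hy
    | ι m => exact fun y hy => iota_mul_mem P κ m y hy
    | mul a b ha hb => intro y hy; rw [mul_assoc]; exact ha _ (hb _ hy)
    | add a b ha hb => intro y hy; rw [add_mul]; exact Submodule.add_mem _ (ha y hy) (hb y hy)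
  simpa using hx 1 h1

lemma w_eq_wl (S : Finset κ) (l : List κ) (hs : l.Pairwise (· < ·))
    (ht : ∀ x, x ∈ l ↔ x ∈ S) : w P κ S = wl P κ l := by
  have hS : S = l.toFinset := by
    ext x
    rw [List.mem_toFinset, ht]
  rw [hS, w, sort_toFinset_of_sorted (κ := κ) l hs]

end ExtAux

namespace ExtApply
open ExtAux

/-- Linear order on `Fin n ⊕ Fin n` with all `inl` before all `inr`. -/
def sOrd (n : ℕ) : LinearOrder (Fin n ⊕ Fin n) :=
  LinearOrder.lift' (fun x => finSumFinEquiv x) finSumFinEquiv.injective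

attribute [local instance 2000] sOrd

variable (n : ℕ)

lemma lt_inl_inl (a b : Fin n) : (sOrd n).lt (Sum.inl a) (Sum.inl b) ↔ a < b := by
  show finSumFinEquiv (Sum.inl a) < finSumFinEquiv (Sum.inl b) ↔ a < b
  rw [finSumFinEquiv_apply_left, finSumFinEquiv_apply_left, Fin.lt_def, Fin.lt_def]
  simp

lemma lt_inr_inr (a b : Fin n) : (sOrd n).lt (Sum.inr a) (Sum.inr b) ↔ a < b := by
  show finSumFinEquiv (Sum.inr a) < finSumFinEquiv (Sum.inr b) ↔ a < b
  rw [finSumFinEquiv_apply_right, finSumFinEquiv_apply_right, Fin.lt_def, Fin.lt_def]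
  simp

lemma lt_inl_inr (a b : Fin n) : (sOrd n).lt (Sum.inl a) (Sum.inr b) := by
  show finSumFinEquiv (Sum.inl a) < finSumFinEquiv (Sum.inr b)
  rw [finSumFinEquiv_apply_left, finSumFinEquiv_apply_right, Fin.lt_def]
  simp only [Fin.coe_castAdd, Fin.coe_natAdd]
  exact lt_of_lt_of_le a.isLt (Nat.le_add_right n b)

/-- the canonical list of `I.disjSum J` -/
def catList (I J : Finset (Fin n)) : List (Fin n ⊕ Fin n) :=
  ((I.sort (· ≤ ·)).map Sum.inl) ++ ((J.sort (· ≤ ·)).map Sum.inr)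

lemma catList_sorted (I J : Finset (Fin n)) :
    (catList n I J).Pairwise (fun a b => (sOrd n).lt a b) := by
  rw [catList, List.pairwise_append]
  refine ⟨?_, ?_, ?_⟩
  · exact List.Pairwise.map _ (fun a b h => (lt_inl_inl n a b).mpr h) (Finset.sortedLT_sort I).pairwise
  · exact List.Pairwise.map _ (fun a b h => (lt_inr_inr n a b).mpr h) (Finset.sortedLT_sort J).pairwise
  · intro x hx y hy
    obtain ⟨a, -, rfl⟩ := List.mem_map.mp hx
    obtain ⟨b, -, rfl⟩ := List.mem_map.mp hy
    exact lt_inl_inr n a b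

lemma catList_mem (I J : Finset (Fin n)) (x : Fin n ⊕ Fin n) :
    x ∈ catList n I J ↔ x ∈ I.disjSum J := by
  cases x with
  | inl a =>
    simp [catList, List.mem_append, List.mem_map, Finset.inl_mem_disjSum, Finset.mem_sort]
  | inr b =>
    simp [catList, List.mem_append, List.mem_map, Finset.inr_mem_disjSum, Finset.mem_sort]

lemma w_disjSum (I J : Finset (Fin n)) :
    w (Ploc n) (Fin n ⊕ Fin n) (I.disjSum J) = wl (Ploc n) (Fin n ⊕ Fin n) (catList n I J) :=
  w_eq_wl (Ploc n) (Fin n ⊕ Fin n) (I.disjSum J) (catList n I J)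
    (catList_sorted n I J) (catList_mem n I J)

/-- The localized Vandermonde matrix. -/
def Wm : Matrix (Fin n) (Fin n) (Ploc n) :=
  (Matrix.vandermonde (tv ℤ n)).map (algebraMap (Pn ℤ n) (Ploc n))

lemma isUnit_detW : IsUnit (Wm n).det := by
  have hmm : (Matrix.vandermonde (tv ℤ n)).map (algebraMap (Pn ℤ n) (Ploc n))
      = (algebraMap (Pn ℤ n) (Ploc n)).mapMatrix (Matrix.vandermonde (tv ℤ n)) := rfl
  rw [Wm, hmm, ← RingHom.map_det]
  have h : (Matrix.vandermonde (tv ℤ n)).det = Dl ℤ n := by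
    have : Vmat ℤ n = (Matrix.vandermonde (tv ℤ n)).transpose := by
      ext i j
      rfl
    rw [Dl, this, Matrix.det_transpose]
  rw [h]
  exact IsLocalization.Away.algebraMap_isUnit (S := Ploc n) (Dl ℤ n)

/-- The block-diagonal matrix with two Vandermonde blocks. -/
def Am : Matrix (Fin n ⊕ Fin n) (Fin n ⊕ Fin n) (Ploc n) :=
  Matrix.fromBlocks (Wm n) 0 0 (Wm n)

lemma isUnit_detA : IsUnit (Am n).det := by
  rw [Am, Matrix.det_fromBlocks_zero₂₁]
  exact (isUnit_detW n).mul (isUnit_detW n)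

/-- The linear change of variables. -/
def ff : MM (Ploc n) (Fin n ⊕ Fin n) →ₗ[Ploc n] MM (Ploc n) (Fin n ⊕ Fin n) :=
  Matrix.toLin (Pi.basisFun (Ploc n) _) (Pi.basisFun (Ploc n) _) (Am n)

def gg : MM (Ploc n) (Fin n ⊕ Fin n) →ₗ[Ploc n] MM (Ploc n) (Fin n ⊕ Fin n) :=
  Matrix.toLin (Pi.basisFun (Ploc n) _) (Pi.basisFun (Ploc n) _) (Am n)⁻¹

lemma gg_ff : (gg n).comp (ff n) = LinearMap.id := by
  rw [gg, ff, ← Matrix.toLin_mul, Matrix.nonsing_inv_mul _ (isUnit_detA n), Matrix.toLin_one]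

lemma ff_gg : (ff n).comp (gg n) = LinearMap.id := by
  rw [gg, ff, ← Matrix.toLin_mul, Matrix.mul_nonsing_inv _ (isUnit_detA n), Matrix.toLin_one]

/-- The induced algebra endomorphism of `Bloc n`. -/
def phi : Bloc n →ₐ[Ploc n] Bloc n := ExteriorAlgebra.map (ff n)

lemma phi_inj : Function.Injective (phi n) :=
  ExteriorAlgebra.map_injective ⟨gg n, gg_ff n⟩

lemma phi_surj : Function.Surjective (phi n) := by
  apply ExteriorAlgebra.map_surjective_iff.mpr
  intro y
  exact ⟨gg n y, by rw [← LinearMap.comp_apply, ff_gg]; rfl⟩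

lemma ee_eq_basisFun (k : Fin n ⊕ Fin n) :
    ee (Ploc n) (Fin n ⊕ Fin n) k = Pi.basisFun (Ploc n) (Fin n ⊕ Fin n) k := by
  funext j
  simp [ee, Pi.basisFun_apply, Pi.single_apply, Function.update]

lemma ff_ee (k : Fin n ⊕ Fin n) :
    ff n (ee (Ploc n) (Fin n ⊕ Fin n) k)
      = ∑ i : Fin n ⊕ Fin n, Am n i k • Pi.basisFun (Ploc n) (Fin n ⊕ Fin n) i := by
  rw [ee_eq_basisFun, ff, Matrix.toLin_self]

lemma Wm_apply (i j : Fin n) : Wm n i j = tL n i ^ (j : ℕ) := by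
  simp [Wm, Matrix.vandermonde, tL, map_pow]

lemma phi_iota_inl (i : Fin n) :
    phi n (ExteriorAlgebra.ι (Ploc n) (ee (Ploc n) (Fin n ⊕ Fin n) (Sum.inl i)))
      = XelL n (i.1 + 1) := by
  rw [phi, ExteriorAlgebra.map_apply_ι, ff_ee, map_sum, XelL]
  rw [Fintype.sum_sum_type]
  have h2 : ∀ j : Fin n,
      ExteriorAlgebra.ι (Ploc n)
        (Am n (Sum.inr j) (Sum.inl i) • Pi.basisFun (Ploc n) (Fin n ⊕ Fin n) (Sum.inr j)) = 0 := by
    intro j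
    have hz : Am n (Sum.inr j) (Sum.inl i) = 0 := by simp [Am, Matrix.fromBlocks_apply₂₁]
    have h0 : Am n (Sum.inr j) (Sum.inl i) • Pi.basisFun (Ploc n) (Fin n ⊕ Fin n) (Sum.inr j)
        = (0 : MM (Ploc n) (Fin n ⊕ Fin n)) := by
      rw [hz]
      exact zero_smul (Ploc n) (Pi.basisFun (Ploc n) (Fin n ⊕ Fin n) (Sum.inr j))
    rw [h0, map_zero]
  rw [Finset.sum_congr rfl fun j _ => h2 j, Finset.sum_const, smul_zero, add_zero]
  refine Finset.sum_congr rfl fun j _ => ?_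
  rw [map_smul]
  have hA : Am n (Sum.inl j) (Sum.inl i) = tL n j ^ (i : ℕ) := by
    rw [Am, Matrix.fromBlocks_apply₁₁, Wm_apply]
  rw [hA, Nat.add_sub_cancel, Algebra.smul_def]
  congr 1
  rw [uL, ← ee_eq_basisFun]
  congr 1
  funext x
  by_cases h : x = Sum.inl j <;> simp [ExtAux.ee, Pi.single_apply, h]

lemma phi_iota_inr (i : Fin n) :
    phi n (ExteriorAlgebra.ι (Ploc n) (ee (Ploc n) (Fin n ⊕ Fin n) (Sum.inr i)))
      = YelL n (i.1 + 1) := by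
  rw [phi, ExteriorAlgebra.map_apply_ι, ff_ee, map_sum, YelL]
  rw [Fintype.sum_sum_type]
  have h2 : ∀ j : Fin n,
      ExteriorAlgebra.ι (Ploc n)
        (Am n (Sum.inl j) (Sum.inr i) • Pi.basisFun (Ploc n) (Fin n ⊕ Fin n) (Sum.inl j)) = 0 := by
    intro j
    have hz : Am n (Sum.inl j) (Sum.inr i) = 0 := by simp [Am, Matrix.fromBlocks_apply₁₂]
    have h0 : Am n (Sum.inl j) (Sum.inr i) • Pi.basisFun (Ploc n) (Fin n ⊕ Fin n) (Sum.inl j)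
        = (0 : MM (Ploc n) (Fin n ⊕ Fin n)) := by
      rw [hz]
      exact zero_smul (Ploc n) (Pi.basisFun (Ploc n) (Fin n ⊕ Fin n) (Sum.inl j))
    rw [h0, map_zero]
  rw [Finset.sum_congr rfl fun j _ => h2 j, Finset.sum_const, smul_zero, zero_add]
  refine Finset.sum_congr rfl fun j _ => ?_
  rw [map_smul]
  have hA : Am n (Sum.inr j) (Sum.inr i) = tL n j ^ (i : ℕ) := by
    rw [Am, Matrix.fromBlocks_apply₂₂, Wm_apply]
  rw [hA, Nat.add_sub_cancel, Algebra.smul_def]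
  congr 1
  rw [vL, ← ee_eq_basisFun]
  congr 1
  funext x
  by_cases h : x = Sum.inr j <;> simp [ExtAux.ee, Pi.single_apply, h]

lemma phi_w (I J : Finset (Fin n)) :
    phi n (w (Ploc n) (Fin n ⊕ Fin n) (I.disjSum J)) = famL n (I, J) := by
  rw [w_disjSum, catList, wl, List.map_append, List.prod_append, map_mul,
    List.map_map, List.map_map, map_list_prod, map_list_prod, List.map_map, List.map_map]
  have hx : (⇑(phi n)
      ∘ ((fun k => ExteriorAlgebra.ι (Ploc n) (ee (Ploc n) (Fin n ⊕ Fin n) k)) ∘ Sum.inl))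
      = fun i : Fin n => XelL n (i.1 + 1) := by
    funext i
    exact phi_iota_inl n i
  have hy : (⇑(phi n)
      ∘ ((fun k => ExteriorAlgebra.ι (Ploc n) (ee (Ploc n) (Fin n ⊕ Fin n) k)) ∘ Sum.inr))
      = fun i : Fin n => YelL n (i.1 + 1) := by
    funext i
    exact phi_iota_inr n i
  show ((I.sort (· ≤ ·)).map _).prod * ((J.sort (· ≤ ·)).map _).prod = famL n (I, J)
  rw [hx, hy]
  rfl

lemma sigma_inj : Function.Injective
    (fun p : Finset (Fin n) × Finset (Fin n) => p.1.disjSum p.2) := by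
  intro p q h
  have h1 := congrArg Finset.toLeft h
  have h2 := congrArg Finset.toRight h
  simp only [Finset.toLeft_disjSum, Finset.toRight_disjSum] at h1 h2
  exact Prod.ext h1 h2

lemma sigma_surj : Function.Surjective
    (fun p : Finset (Fin n) × Finset (Fin n) => p.1.disjSum p.2) := by
  intro S
  exact ⟨(S.toLeft, S.toRight), Finset.toLeft_disjSum_toRight⟩

end ExtApply

/-- The localization `B[Δ⁻¹]` is a free `P[Δ⁻¹]`-module of rank `2^{2n}`, with basis the
`4^n` products `X_I·Y_J` over all subsets `I, J ⊆ {1,…,n}`. -/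
theorem bloc_free_on_XIYJ (n : ℕ) (hn : 1 ≤ n) :
    LinearIndependent (Ploc n) (famL n) ∧
      Submodule.span (Ploc n) (Set.range (famL n)) = ⊤ := by
  letI := ExtApply.sOrd n
  have hfam : famL n = (ExtApply.phi n) ∘ (ExtAux.w (Ploc n) (Fin n ⊕ Fin n))
      ∘ (fun p : Finset (Fin n) × Finset (Fin n) => p.1.disjSum p.2) := by
    funext p
    exact (ExtApply.phi_w n p.1 p.2).symm
  constructor
  · rw [hfam]
    have h1 : LinearIndependent (Ploc n) (ExtAux.w (Ploc n) (Fin n ⊕ Fin n)) :=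
      ExtAux.w_lin_indep _ _
    have h2 := h1.map' (ExtApply.phi n).toLinearMap
      (LinearMap.ker_eq_bot.mpr (ExtApply.phi_inj n))
    exact h2.comp _ (ExtApply.sigma_inj n)
  · rw [hfam]
    have hr : Set.range ((ExtApply.phi n) ∘ (ExtAux.w (Ploc n) (Fin n ⊕ Fin n))
        ∘ (fun p : Finset (Fin n) × Finset (Fin n) => p.1.disjSum p.2))
        = (ExtApply.phi n).toLinearMap '' Set.range (ExtAux.w (Ploc n) (Fin n ⊕ Fin n)) := by
      rw [Set.range_comp, Set.range_comp, Set.range_eq_univ.mpr (ExtApply.sigma_surj n),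
        Set.image_univ]
      rfl
    rw [hr, Submodule.span_image, ExtAux.w_span_top, Submodule.map_top,
      LinearMap.range_eq_top]
    exact ExtApply.phi_surj n

end
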